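/- Let a < b, ρ > 0, N > 8, and let X : [a, b] → ℝ² be a differentiable curve such that ‖X'(t)‖ ≥ ρ for all t ∈ [a, b] and X'(t) · X'(s) ≥ (1 − 8/N) ‖X'(t)‖ ‖X'(s)‖ for all s, t ∈ [a, b]. Then X is injective on [a, b]; in fact, with u = X'(a)/‖X'(a)‖, the map t ↦ X(t) · u is strictly increasing with derivative at least ρ(1 − 8/N) > 0. -/
import Mathlib


open scoped InnerProductSpace

/-- A planar `C¹` curve whose tangent vectors are nonvanishing and pairwise aligned with
cosine at least `1 - 8/N` cannot intersect itself: it is injective, and its projection on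
the initial unit tangent direction is strictly increasing with derivative at least
`ρ(1 - 8/N) > 0`. -/
theorem aligned_curve_no_self_intersection (a b ρ N : ℝ) (hab : a < b) (hρ : 0 < ρ)
    (hN : 8 < N)
    (X X' : ℝ → EuclideanSpace ℝ (Fin 2))
    (hX : ∀ t ∈ Set.Icc a b, HasDerivAt X (X' t) t)
    (hlow : ∀ t ∈ Set.Icc a b, ρ ≤ ‖X' t‖)
    (halign : ∀ s ∈ Set.Icc a b, ∀ t ∈ Set.Icc a b,
      (1 - 8 / N) * ‖X' t‖ * ‖X' s‖ ≤ ⟪X' t, X' s⟫_ℝ) :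
    Set.InjOn X (Set.Icc a b) ∧
    0 < ρ * (1 - 8 / N) ∧
    StrictMonoOn (fun t => ⟪X t, ‖X' a‖⁻¹ • X' a⟫_ℝ) (Set.Icc a b) ∧
    (∀ t ∈ Set.Icc a b, ρ * (1 - 8 / N) ≤ ⟪X' t, ‖X' a‖⁻¹ • X' a⟫_ℝ) := by
  have hN0 : (0:ℝ) < N := by linarith
  have hcoef : (0:ℝ) < 1 - 8 / N := by
    have : 8 / N < 1 := (div_lt_one hN0).mpr hN
    linarith
  have hc : 0 < ρ * (1 - 8 / N) := mul_pos hρ hcoef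
  have ha : a ∈ Set.Icc a b := ⟨le_refl a, hab.le⟩
  have hXa : (0:ℝ) < ‖X' a‖ := lt_of_lt_of_le hρ (hlow a ha)
  set u : EuclideanSpace ℝ (Fin 2) := ‖X' a‖⁻¹ • X' a with hu
  -- the key derivative lower bound
  have hkey : ∀ t ∈ Set.Icc a b, ρ * (1 - 8 / N) ≤ ⟪X' t, u⟫_ℝ := by
    intro t ht
    have h1 : ⟪X' t, u⟫_ℝ = ‖X' a‖⁻¹ * ⟪X' t, X' a⟫_ℝ := real_inner_smul_right _ _ _
    have h2 : (1 - 8 / N) * ‖X' t‖ * ‖X' a‖ ≤ ⟪X' t, X' a⟫_ℝ := halign a ha t ht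
    have h3 : ‖X' a‖⁻¹ * ((1 - 8 / N) * ‖X' t‖ * ‖X' a‖) ≤ ‖X' a‖⁻¹ * ⟪X' t, X' a⟫_ℝ :=
      mul_le_mul_of_nonneg_left h2 (inv_nonneg.mpr hXa.le)
    have h4 : ‖X' a‖⁻¹ * ((1 - 8 / N) * ‖X' t‖ * ‖X' a‖) = (1 - 8 / N) * ‖X' t‖ := by
      field_simp
    have h5 : ρ * (1 - 8 / N) ≤ (1 - 8 / N) * ‖X' t‖ := by
      have := hlow t ht
      nlinarith
    rw [h1]; linarith [h3, h4 ▸ h3]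
  -- derivative of the projection
  have hf' : ∀ t ∈ Set.Icc a b,
      HasDerivAt (fun t => ⟪X t, u⟫_ℝ) ⟪X' t, u⟫_ℝ t := by
    intro t ht
    have : HasDerivAt (fun t => (innerSL ℝ u) (X t)) ((innerSL ℝ u) (X' t)) t :=
      (innerSL ℝ u).hasFDerivAt.comp_hasDerivAt t (hX t ht)
    simp only [innerSL_apply_apply] at this
    simpa only [real_inner_comm u] using this
  have hcont : ContinuousOn (fun t => ⟪X t, u⟫_ℝ) (Set.Icc a b) :=
    fun t ht => ((hf' t ht).continuousAt).continuousWithinAt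
  have hmono : StrictMonoOn (fun t => ⟪X t, u⟫_ℝ) (Set.Icc a b) := by
    apply strictMonoOn_of_hasDerivWithinAt_pos (convex_Icc a b) hcont
      (fun t ht => ((hf' t (Set.mem_Icc_of_Ioo (by simpa using ht))).hasDerivWithinAt))
    intro t ht
    exact lt_of_lt_of_le hc (hkey t (Set.mem_Icc_of_Ioo (by simpa using ht)))
  refine ⟨?_, hc, hmono, hkey⟩
  intro s hs t ht hst
  by_contra hne
  rcases lt_or_gt_of_ne hne with h | h
  · exact absurd (hmono hs ht h) (by simp [hst])
  · exact absurd (hmono ht hs h) (by simp [hst])
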